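/- Assume δ_1 > 1. Then for any 0 < r ≤ r_0 and x, z ∈ ℝ^d, the quantity |∫_{r ≤ |y-x| < r_0} ∇b_{z,r}(x)·(y-x) K(x,y) dy| is at most 4 ω_d Λ (1/(a_1(δ_1-1))) f(r^{-1}), where b_{z,r}(x) = (1 − |x-z|^2/r^2)_+^2. -/

import Mathlib

open MeasureTheory Real Set Metric InnerProductSpace

noncomputable def bumpFn (d : ℕ) (z : EuclideanSpace ℝ (Fin d)) (r : ℝ)
    (x : EuclideanSpace ℝ (Fin d)) : ℝ :=
  (max (1 - (dist x z / r) ^ 2) 0) ^ 2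

lemma psi_hasDerivAt (t : ℝ) :
    HasDerivAt (fun s : ℝ => (max (1 - s) 0) ^ 2) (-2 * max (1 - t) 0) t := by
  rcases lt_trichotomy t 1 with ht | ht | ht
  · have h1 : HasDerivAt (fun s : ℝ => (1 - s) ^ 2) (2 * (1 - t) ^ 1 * (-1)) t := by
      have := ((hasDerivAt_id t).const_sub 1).fun_pow 2
      simpa using this
    have h2 : (fun s : ℝ => (max (1 - s) 0) ^ 2) =ᶠ[nhds t] (fun s : ℝ => (1 - s) ^ 2) := by
      filter_upwards [Iio_mem_nhds ht] with s hs
      rw [max_eq_left (by simp at hs ⊢; linarith)]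
    have := h1.congr_of_eventuallyEq h2
    rw [show -2 * max (1 - t) 0 = 2 * (1 - t) ^ 1 * (-1) by rw [max_eq_left (by linarith)]; ring]
    exact this
  · subst ht
    rw [hasDerivAt_iff_isLittleO]
    have hO : (fun s : ℝ => (max (1 - s) 0) ^ 2) =O[nhds 1] (fun s => (s - 1) ^ 2) := by
      apply Asymptotics.isBigO_of_le
      intro s
      rw [Real.norm_eq_abs, Real.norm_eq_abs, abs_of_nonneg (by positivity),
        abs_of_nonneg (by positivity)]
      have : |max (1 - s) 0| ≤ |1 - s| := by
        rcases le_total (1 - s) 0 with h | h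
        · rw [max_eq_right h]; simp [abs_nonneg]
        · rw [max_eq_left h]
      calc (max (1 - s) 0) ^ 2 = |max (1 - s) 0| ^ 2 := by rw [abs_of_nonneg (le_max_right _ _)]
        _ ≤ |1 - s| ^ 2 := by gcongr
        _ = (s - 1) ^ 2 := by rw [← abs_pow]; rw [abs_of_nonneg (by positivity)]; ring_nf
    have ho : (fun s : ℝ => (s - 1) ^ 2) =o[nhds 1] (fun s => s - 1) := by
      have h1 : (fun s : ℝ => s - 1) =o[nhds 1] (fun _ : ℝ => (1 : ℝ)) := by
        rw [Asymptotics.isLittleO_one_iff]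
        have : ContinuousAt (fun s : ℝ => s - 1) 1 := by fun_prop
        simpa using this.tendsto
      have := h1.mul_isBigO (Asymptotics.isBigO_refl (fun s : ℝ => s - 1) (nhds 1))
      simpa [sq, one_mul] using this
    refine (hO.trans_isLittleO ho).congr' ?_ (Filter.EventuallyEq.refl _ _)
    filter_upwards with s
    simp
  · have h2 : (fun s : ℝ => (max (1 - s) 0) ^ 2) =ᶠ[nhds t] (fun _ : ℝ => (0:ℝ)) := by
      filter_upwards [Ioi_mem_nhds ht] with s hs
      rw [max_eq_right (by simp at hs ⊢; linarith)]
      norm_num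
    have := (hasDerivAt_const t (0:ℝ)).congr_of_eventuallyEq h2
    rw [show -2 * max (1 - t) 0 = 0 by rw [max_eq_right (by linarith)]; ring]
    exact this

lemma bump_hasGradient (d : ℕ) (z x : EuclideanSpace ℝ (Fin d)) (r : ℝ) :
    HasGradientAt (bumpFn d z r)
      ((-4 * max (1 - ‖x - z‖ ^ 2 / r ^ 2) 0 / r ^ 2) • (x - z)) x := by
  have hq : HasFDerivAt (fun y : EuclideanSpace ℝ (Fin d) => (r ^ 2)⁻¹ * ‖y - z‖ ^ 2)
      ((r ^ 2)⁻¹ • (2 • (innerSL ℝ (x - z)).comp (ContinuousLinearMap.id ℝ _))) x :=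
    (((hasFDerivAt_id x).sub_const z).norm_sq).const_mul _
  have hcomp := (psi_hasDerivAt ((r ^ 2)⁻¹ * ‖x - z‖ ^ 2)).comp_hasFDerivAt x hq
  have hfun : bumpFn d z r = ((fun s : ℝ => (max (1 - s) 0) ^ 2) ∘
      (fun y : EuclideanSpace ℝ (Fin d) => (r ^ 2)⁻¹ * ‖y - z‖ ^ 2)) := by
    funext y
    simp only [bumpFn, dist_eq_norm, div_pow, Function.comp_apply]
    rw [div_eq_inv_mul]
  rw [HasGradientAt, HasGradientAtFilter, hfun]
  have hD : toDual ℝ (EuclideanSpace ℝ (Fin d))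
        ((-4 * max (1 - ‖x - z‖ ^ 2 / r ^ 2) 0 / r ^ 2) • (x - z))
      = (-2 * max (1 - (r ^ 2)⁻¹ * ‖x - z‖ ^ 2) 0) •
        ((r ^ 2)⁻¹ • (2 • (innerSL ℝ (x - z)).comp (ContinuousLinearMap.id ℝ _))) := by
    apply ContinuousLinearMap.ext
    intro v
    simp only [toDual_apply_apply, ContinuousLinearMap.smul_apply, ContinuousLinearMap.coe_comp',
      Function.comp_apply, ContinuousLinearMap.coe_id', id_eq, innerSL_apply_apply,
      real_inner_smul_left, smul_eq_mul, div_eq_inv_mul (‖x - z‖ ^ 2) (r ^ 2)]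
    ring
  rw [hD]
  exact hcomp

lemma bump_grad_bound (d : ℕ) (z x : EuclideanSpace ℝ (Fin d)) (r : ℝ) (hr : 0 < r) :
    ‖gradient (bumpFn d z r) x‖ ≤ 4 / r := by
  rw [(bump_hasGradient d z x r).gradient]
  rw [norm_smul, Real.norm_eq_abs]
  rcases le_total ‖x - z‖ r with h | h
  · have hm0 : (0:ℝ) ≤ max (1 - ‖x - z‖ ^ 2 / r ^ 2) 0 := le_max_right _ _
    have hm1 : max (1 - ‖x - z‖ ^ 2 / r ^ 2) 0 ≤ 1 := by
      apply max_le ?_ zero_le_one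
      have : 0 ≤ ‖x - z‖ ^ 2 / r ^ 2 := by positivity
      linarith
    have hm : |(-4 * max (1 - ‖x - z‖ ^ 2 / r ^ 2) 0 / r ^ 2)| ≤ 4 / r ^ 2 := by
      have he : (-4 * max (1 - ‖x - z‖ ^ 2 / r ^ 2) 0 / r ^ 2)
          = -(4 * max (1 - ‖x - z‖ ^ 2 / r ^ 2) 0 / r ^ 2) := by ring
      rw [he, abs_neg, abs_of_nonneg (by positivity)]
      gcongr
      linarith
    calc |(-4 * max (1 - ‖x - z‖ ^ 2 / r ^ 2) 0 / r ^ 2)| * ‖x - z‖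
        ≤ (4 / r ^ 2) * r := by
          apply mul_le_mul hm h (norm_nonneg _) (by positivity)
      _ = 4 / r := by field_simp
  · have hm : max (1 - ‖x - z‖ ^ 2 / r ^ 2) 0 = 0 := by
      apply max_eq_right
      have : r ^ 2 ≤ ‖x - z‖ ^ 2 := by gcongr
      have h2 : ‖x - z‖ ^ 2 / r ^ 2 ≥ 1 := (one_le_div (by positivity)).2 this
      linarith
    rw [hm]
    simp
    positivity

set_option maxHeartbeats 1600000 in
theorem stmt8 (d : ℕ) (hd : 1 ≤ d) (r0 a1 a2 d1 d2 lam Lam : ℝ) (f : ℝ → ℝ)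
    (J K : EuclideanSpace ℝ (Fin d) → EuclideanSpace ℝ (Fin d) → ℝ)
    (hr0 : 0 < r0) (ha1 : 0 < a1) (ha2 : 0 < a2)
    (hd1 : d1 ∈ Set.Ioo (0:ℝ) 2) (hd2 : d2 ∈ Set.Ioo (0:ℝ) 2) (hd1' : 1 < d1)
    (hlam : 0 < lam) (hLam : lam ≤ Lam)
    (hf0 : ∀ s, 0 ≤ s → 0 ≤ f s)
    (hmono : ∀ s t, 0 ≤ s → s ≤ t → f s ≤ f t)
    (hscale : ∀ s t, 1 ≤ s → 1/r0 ≤ t →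
      a1 * s ^ d1 * f t ≤ f (s * t) ∧ f (s * t) ≤ a2 * s ^ d2 * f t)
    (hJ : ∀ x y, 0 < dist x y → dist x y < r0 →
      J x y = f (dist x y)⁻¹ / (dist x y) ^ (d : ℝ))
    (hK : ∀ x y, x ≠ y → lam * J x y ≤ K x y ∧ K x y ≤ Lam * J x y) :
    ∀ r : ℝ, 0 < r → r ≤ r0 → ∀ x z : EuclideanSpace ℝ (Fin d),
      |∫ y in {y : EuclideanSpace ℝ (Fin d) | r ≤ dist y x ∧ dist y x < r0},
          (inner ℝ (gradient (bumpFn d z r) x) (y - x) : ℝ) * K x y| ≤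
        4 * (2 * Real.pi ^ ((d:ℝ)/2) / Real.Gamma ((d:ℝ)/2)) * Lam *
          (1 / (a1 * (d1 - 1))) * f r⁻¹ := by
  intro r hr hrr0 x z
  haveI : Nontrivial (EuclideanSpace ℝ (Fin d)) :=
    Module.nontrivial_of_finrank_pos (R := ℝ) (by rw [finrank_euclideanSpace_fin]; omega)
  have hLam0 : 0 < Lam := hlam.trans_le hLam
  have hd1pos : (0:ℝ) < d1 - 1 := by linarith [hd1']
  have hfr : 0 ≤ f r⁻¹ := hf0 _ (by positivity)
  have hdR : (1:ℝ) ≤ (d:ℝ) := by exact_mod_cast hd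
  set A : Set (EuclideanSpace ℝ (Fin d)) := {y | r ≤ dist y x ∧ dist y x < r0} with hA
  set F : ℝ → ℝ := fun s => f (max s 0) with hF
  have hFmono : Monotone F := fun s t hst => hmono _ _ (le_max_right _ _) (max_le_max hst le_rfl)
  have hFmeas : Measurable F := hFmono.measurable
  have hFnn : ∀ s, 0 ≤ F s := fun s => hf0 _ (le_max_right _ _)
  have hFf : ∀ s : ℝ, 0 ≤ s → F s = f s := fun s hs => by rw [hF]; simp [max_eq_left hs]
  set G0 : ℝ → ℝ := fun ρ => 4 * Lam / r * (F ρ⁻¹ * ρ ^ (1 - (d:ℝ))) with hG0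
  set h : EuclideanSpace ℝ (Fin d) → ℝ := fun y => G0 (dist y x) with hh
  have hdm : Measurable fun y : EuclideanSpace ℝ (Fin d) => dist y x :=
    (continuous_id.dist continuous_const).measurable
  have hAmeas : MeasurableSet A := by
    have : A = (fun y => dist y x) ⁻¹' (Ico r r0) := by
      ext y; simp [hA, mem_Ico]
    rw [this]
    exact hdm measurableSet_Ico
  have hAfin : volume A < ⊤ := by
    refine lt_of_le_of_lt (measure_mono ?_) (measure_closedBall_lt_top (x := x) (r := r0))
    intro y hy; exact mem_closedBall.2 hy.2.le
  have hG0nn : ∀ ρ : ℝ, 0 < ρ → 0 ≤ G0 ρ := by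
    intro ρ hρ
    exact mul_nonneg (by positivity) (mul_nonneg (hFnn _) (Real.rpow_nonneg hρ.le _))
  -- Step 1 : integrand bound
  have hmain : ∀ y ∈ A,
      |(inner ℝ (gradient (bumpFn d z r) x) (y - x) : ℝ) * K x y| ≤ h y := by
    intro y hy
    obtain ⟨hy1, hy2⟩ := hy
    have hρ : 0 < dist y x := hr.trans_le hy1
    have hxy : 0 < dist x y := by rwa [dist_comm]
    have hyx : y ≠ x := by
      intro hyx; rw [hyx] at hρ; simp at hρ
    have hJpos : 0 ≤ J x y := by
      rw [hJ x y hxy (by rwa [dist_comm])]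
      have := hf0 (dist x y)⁻¹ (by positivity)
      positivity
    have hKb : |K x y| ≤ Lam * J x y := by
      obtain ⟨hk1, hk2⟩ := hK x y (Ne.symm hyx)
      rw [abs_le]
      constructor
      · nlinarith
      · exact hk2
    have hinner : |(inner ℝ (gradient (bumpFn d z r) x) (y - x) : ℝ)| ≤ 4 / r * dist y x := by
      refine (abs_real_inner_le_norm _ _).trans ?_
      rw [dist_eq_norm]
      exact mul_le_mul_of_nonneg_right (bump_grad_bound d z x r hr) (norm_nonneg _)
    rw [abs_mul]
    calc |(inner ℝ (gradient (bumpFn d z r) x) (y - x) : ℝ)| * |K x y|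
        ≤ (4 / r * dist y x) * (Lam * J x y) := by
          apply mul_le_mul hinner hKb (abs_nonneg _) (by positivity)
      _ = h y := by
          rw [hJ x y hxy (by rwa [dist_comm]), dist_comm x y]
          rw [hh, hG0]
          simp only
          rw [hFf _ (by positivity)]
          rw [show (1 : ℝ) - (d:ℝ) = 1 + (-(d:ℝ)) by ring, Real.rpow_add hρ,
            Real.rpow_one, Real.rpow_neg hρ.le]
          field_simp
  -- Step 1b : h integrable on A
  have hhmeas : Measurable h := by
    apply Measurable.const_mul
    exact (hFmeas.comp hdm.inv).mul (hdm.pow measurable_const)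
  have hhint : IntegrableOn h A := by
    refine Integrable.mono' (g := fun _ => 4 * Lam / r * (F r⁻¹ * r ^ (1 - (d:ℝ))))
      (integrableOn_const hAfin.ne) hhmeas.aestronglyMeasurable ?_
    rw [ae_restrict_iff' hAmeas]
    filter_upwards with y hy
    obtain ⟨hy1, hy2⟩ := hy
    have hρ : 0 < dist y x := hr.trans_le hy1
    rw [Real.norm_eq_abs, hh, hG0]
    simp only
    rw [abs_of_nonneg (mul_nonneg (by positivity)
      (mul_nonneg (hFnn _) (Real.rpow_nonneg hρ.le _)))]
    refine mul_le_mul_of_nonneg_left ?_ (by positivity)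
    refine mul_le_mul (hFmono (by bound)) ?_ (Real.rpow_nonneg hρ.le _) (hFnn _)
    exact Real.rpow_le_rpow_of_nonpos hr hy1 (by linarith)
  -- Step 2 : polar coordinates
  have hpolar : ∫ y in A, h y =
      (Module.finrank ℝ (EuclideanSpace ℝ (Fin d))) •
        (volume (ball (0 : EuclideanSpace ℝ (Fin d)) 1)).toReal •
        ∫ ρ in Ioi (0:ℝ), ρ ^ (Module.finrank ℝ (EuclideanSpace ℝ (Fin d)) - 1) •
          ((Ico r r0).indicator G0 ρ) := by
    rw [← integral_indicator hAmeas]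
    have h1 : A.indicator h = fun y => (Ico r r0).indicator G0 ‖y - x‖ := by
      funext y
      by_cases hy : y ∈ A
      · rw [indicator_of_mem hy, indicator_of_mem (by simpa [mem_Ico, dist_eq_norm, hA] using hy),
          hh]
        simp [dist_eq_norm]
      · rw [indicator_of_notMem hy, indicator_of_notMem (by simpa [mem_Ico, dist_eq_norm, hA] using hy)]
    rw [h1]
    have h2 : ∫ y : EuclideanSpace ℝ (Fin d), (Ico r r0).indicator G0 ‖y - x‖ =
        ∫ v : EuclideanSpace ℝ (Fin d), (Ico r r0).indicator G0 ‖v‖ := by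
      have := integral_add_right_eq_self (μ := volume)
        (fun v : EuclideanSpace ℝ (Fin d) => (Ico r r0).indicator G0 ‖v‖) (-x)
      rw [← this]
      simp only [sub_eq_add_neg]
    rw [h2]
    exact integral_fun_norm_addHaar volume ((Ico r r0).indicator G0)
  rw [finrank_euclideanSpace_fin] at hpolar
  -- Step 3a : compute the radial integral
  have hinner_eq : ∫ ρ in Ioi (0:ℝ), ρ ^ (d - 1) • ((Ico r r0).indicator G0 ρ) =
      ∫ ρ in Ico r r0, 4 * Lam / r * F ρ⁻¹ := by
    have e1 : (fun ρ : ℝ => ρ ^ (d - 1) • ((Ico r r0).indicator G0 ρ)) =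
        (Ico r r0).indicator (fun ρ => ρ ^ (d - 1) * G0 ρ) := by
      funext ρ
      by_cases hρ : ρ ∈ Ico r r0 <;>
        simp [indicator_of_mem, indicator_of_notMem, hρ, smul_eq_mul]
    rw [e1, setIntegral_indicator measurableSet_Ico,
      show Ioi (0:ℝ) ∩ Ico r r0 = Ico r r0 from inter_eq_right.mpr
        (fun ρ hρ => hr.trans_le hρ.1)]
    refine setIntegral_congr_fun measurableSet_Ico (fun ρ hρ => ?_)
    have hρpos : 0 < ρ := lt_of_lt_of_le hr hρ.1
    have hcast : (ρ:ℝ) ^ (d - 1) = ρ ^ ((d:ℝ) - 1) := by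
      rw [← Real.rpow_natCast ρ (d - 1), Nat.cast_sub hd, Nat.cast_one]
    rw [hG0]
    simp only
    rw [hcast]
    calc ρ ^ ((d:ℝ) - 1) * (4 * Lam / r * (F ρ⁻¹ * ρ ^ (1 - (d:ℝ))))
        = 4 * Lam / r * F ρ⁻¹ * (ρ ^ ((d:ℝ) - 1) * ρ ^ (1 - (d:ℝ))) := by ring
      _ = 4 * Lam / r * F ρ⁻¹ := by
          rw [← Real.rpow_add hρpos, show (d:ℝ) - 1 + (1 - (d:ℝ)) = 0 by ring,
            Real.rpow_zero, mul_one]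
  -- Step 3b : bound the radial integral
  have hIco : ∫ ρ in Ico r r0, 4 * Lam / r * F ρ⁻¹ ≤
      4 * Lam / r * (f r⁻¹ / a1 * (r / (d1 - 1))) := by
    rw [integral_const_mul]
    refine mul_le_mul_of_nonneg_left ?_ (by positivity)
    set c1 : ℝ := f r⁻¹ / a1 * r ^ d1 with hc1
    have hc1nn : 0 ≤ c1 := mul_nonneg (div_nonneg hfr ha1.le) (Real.rpow_nonneg hr.le _)
    have hpoint : ∀ ρ ∈ Ico r r0, F ρ⁻¹ ≤ c1 * ρ ^ (-d1) := by
      intro ρ hρ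
      have hρpos : 0 < ρ := lt_of_lt_of_le hr hρ.1
      have hs1 : (1:ℝ) ≤ ρ / r := (one_le_div hr).2 hρ.1
      have ht1 : 1 / r0 ≤ ρ⁻¹ := by
        rw [one_div]
        exact inv_anti₀ hρpos hρ.2.le
      have hsc := (hscale (ρ / r) ρ⁻¹ hs1 ht1).1
      rw [show ρ / r * ρ⁻¹ = r⁻¹ by field_simp [mul_comm]] at hsc
      -- hsc : a1 * (ρ / r) ^ d1 * f ρ⁻¹ ≤ f r⁻¹
      have hP : 0 < (ρ / r) ^ d1 := Real.rpow_pos_of_pos (by positivity) _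
      have h1 : f ρ⁻¹ ≤ f r⁻¹ / (a1 * (ρ / r) ^ d1) := by
        rw [le_div_iff₀ (by positivity)]
        nlinarith
      have h2 : f r⁻¹ / (a1 * (ρ / r) ^ d1) = c1 * ρ ^ (-d1) := by
        rw [hc1, Real.div_rpow hρpos.le hr.le, Real.rpow_neg hρpos.le]
        field_simp
      rw [hFf _ (by positivity)]
      exact h1.trans (le_of_eq h2)
    have hrint : IntegrableOn (fun ρ : ℝ => ρ ^ (-d1)) (Ioi r) :=
      integrableOn_Ioi_rpow_of_lt (by linarith) hr
    have hint2 : IntegrableOn (fun ρ : ℝ => c1 * ρ ^ (-d1)) (Ico r r0) := by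
      refine Integrable.const_mul ?_ c1
      exact ((integrableOn_Ici_iff_integrableOn_Ioi enorm_ne_top).2 hrint).mono_set Ico_subset_Ici_self
    have hint1 : IntegrableOn (fun ρ : ℝ => F ρ⁻¹) (Ico r r0) := by
      refine Integrable.mono' (g := fun _ => F r⁻¹)
        (integrableOn_const (by rw [Real.volume_Ico]; exact ENNReal.ofReal_ne_top))
        ((hFmeas.comp measurable_inv).aestronglyMeasurable) ?_
      rw [ae_restrict_iff' measurableSet_Ico]
      filter_upwards with ρ hρ
      have hρpos : 0 < ρ := lt_of_lt_of_le hr hρ.1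
      rw [Real.norm_eq_abs, abs_of_nonneg (hFnn _)]
      exact hFmono (inv_anti₀ hr hρ.1)
    have hnn : 0 ≤ᵐ[volume.restrict (Ioi r)] fun ρ : ℝ => ρ ^ (-d1) := by
      filter_upwards [ae_restrict_mem measurableSet_Ioi] with ρ hρ
      exact Real.rpow_nonneg (le_of_lt (hr.trans hρ)) _
    have h₁ : r ^ d1 * r ^ (-d1 + 1) = r := by
      rw [← Real.rpow_add hr, show d1 + (-d1 + 1) = (1:ℝ) by ring, Real.rpow_one]
    calc ∫ ρ in Ico r r0, F ρ⁻¹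
        ≤ ∫ ρ in Ico r r0, c1 * ρ ^ (-d1) :=
          setIntegral_mono_on hint1 hint2 measurableSet_Ico hpoint
      _ = c1 * ∫ ρ in Ico r r0, ρ ^ (-d1) := integral_const_mul _ _
      _ ≤ c1 * ∫ ρ in Ioi r, ρ ^ (-d1) := by
          refine mul_le_mul_of_nonneg_left ?_ hc1nn
          rw [integral_Ico_eq_integral_Ioo]
          exact setIntegral_mono_set hrint hnn
            (HasSubset.Subset.eventuallyLE Ioo_subset_Ioi_self)
      _ = c1 * (-r ^ (-d1 + 1) / (-d1 + 1)) := by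
          rw [integral_Ioi_rpow_of_lt (by linarith) hr]
      _ = f r⁻¹ / a1 * ((r ^ d1 * r ^ (-d1 + 1)) / (d1 - 1)) := by
          rw [hc1]
          field_simp [show -d1 + 1 ≠ 0 by linarith, show d1 - 1 ≠ 0 by linarith]
          ring
      _ = f r⁻¹ / a1 * (r / (d1 - 1)) := by rw [h₁]
  -- Step 4 : assemble
  have hΓpos : 0 < Real.Gamma ((d:ℝ) / 2) := Real.Gamma_pos_of_pos (by linarith)
  haveI : Nonempty (Fin d) := ⟨⟨0, by omega⟩⟩
  have hconst : ((d:ℕ):ℝ) * (volume (ball (0 : EuclideanSpace ℝ (Fin d)) 1)).toReal =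
      2 * Real.pi ^ ((d:ℝ) / 2) / Real.Gamma ((d:ℝ) / 2) := by
    rw [EuclideanSpace.volume_ball, Fintype.card_fin]
    rw [ENNReal.ofReal_one, one_pow, one_mul, ENNReal.toReal_ofReal
      (by positivity)]
    have hsq : Real.sqrt Real.pi ^ d = Real.pi ^ ((d:ℝ) / 2) := by
      rw [Real.sqrt_eq_rpow, ← Real.rpow_natCast (Real.pi ^ ((1:ℝ)/2)) d,
        ← Real.rpow_mul Real.pi_pos.le,
        show (1:ℝ)/2 * (d:ℕ) = (d:ℝ)/2 by push_cast; ring]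
    have hgam : Real.Gamma ((d:ℝ) / 2 + 1) = ((d:ℝ) / 2) * Real.Gamma ((d:ℝ) / 2) :=
      Real.Gamma_add_one (by linarith)
    rw [hsq, hgam]
    have hdne : (d:ℝ) ≠ 0 := by linarith
    field_simp
  have hvol : 0 ≤ (volume (ball (0 : EuclideanSpace ℝ (Fin d)) 1)).toReal :=
    ENNReal.toReal_nonneg
  calc |∫ y in A, (inner ℝ (gradient (bumpFn d z r) x) (y - x) : ℝ) * K x y|
      ≤ ∫ y in A, h y := by
        rw [← Real.norm_eq_abs]
        refine norm_integral_le_of_norm_le hhint ?_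
        rw [ae_restrict_iff' hAmeas]
        filter_upwards with y hy
        rw [Real.norm_eq_abs]
        exact hmain y hy
    _ = ((d:ℕ):ℝ) * (volume (ball (0 : EuclideanSpace ℝ (Fin d)) 1)).toReal *
        ∫ ρ in Ico r r0, 4 * Lam / r * F ρ⁻¹ := by
        rw [hpolar, hinner_eq, nsmul_eq_mul, smul_eq_mul]
        ring
    _ ≤ ((d:ℕ):ℝ) * (volume (ball (0 : EuclideanSpace ℝ (Fin d)) 1)).toReal *
        (4 * Lam / r * (f r⁻¹ / a1 * (r / (d1 - 1)))) := by
        refine mul_le_mul_of_nonneg_left hIco (by positivity)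
    _ = 4 * (2 * Real.pi ^ ((d:ℝ)/2) / Real.Gamma ((d:ℝ)/2)) * Lam *
          (1 / (a1 * (d1 - 1))) * f r⁻¹ := by
        have key : ∀ S : ℝ, S * (4 * Lam / r * (f r⁻¹ / a1 * (r / (d1 - 1)))) =
            4 * S * Lam * (1 / (a1 * (d1 - 1))) * f r⁻¹ := by
          intro S
          field_simp [hr.ne', ha1.ne', hd1pos.ne']
        rw [hconst]
        exact key _
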